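/- If Ψ(t) = ∫_t^∞ f(t')dt' ~ (c/β) t^{-β} as t → ∞ with 0 < β < 1 and c > 0, then the Laplace transform of f satisfies f̃(s) = 1 - μ s^β + o(s^β) as s → 0+, where μ = cπ/(Γ(β+1) sin(βπ)). -/

import Mathlib

open MeasureTheory Filter

noncomputable def laplace (f : ℝ → ℝ) (s : ℝ) : ℝ :=
  ∫ t in Set.Ioi (0:ℝ), Real.exp (-s * t) * f t

lemma one_sub_exp_integral {s t : ℝ} (hs : 0 < s) (ht : 0 < t) :
    ∫ u in Set.Ioo (0:ℝ) t, s * Real.exp (-s * u) = 1 - Real.exp (-s * t) := by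
  rw [← MeasureTheory.integral_Ioc_eq_integral_Ioo, ← intervalIntegral.integral_of_le ht.le]
  have hderiv : ∀ u ∈ Set.uIcc (0:ℝ) t,
      HasDerivAt (fun x => -Real.exp (-s * x)) (s * Real.exp (-s * u)) u := by
    intro u _
    have h1 : HasDerivAt (fun x : ℝ => -s * x) (-s) u := by
      simpa using (hasDerivAt_id u).const_mul (-s)
    have h2 : HasDerivAt (fun x => -Real.exp (-s * x)) (-(Real.exp (-s * u) * -s)) u :=
      h1.exp.neg
    convert h2 using 1
    ring
  rw [intervalIntegral.integral_eq_sub_of_hasDerivAt hderiv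
    ((continuous_const.mul ((continuous_const.mul continuous_id).rexp)).intervalIntegrable _ _)]
  simp
  ring

/-- Fubini step: `∫ f - laplace f s = ∫ s e^{-su} Ψ(u) du`. -/
lemma key_fubini (f : ℝ → ℝ) (hf_nonneg : ∀ t, 0 ≤ t → 0 ≤ f t)
    (hf_int : IntegrableOn f (Set.Ioi 0)) {s : ℝ} (hs : 0 < s) :
    (∫ t in Set.Ioi (0:ℝ), f t) - laplace f s
      = ∫ u in Set.Ioi (0:ℝ), s * Real.exp (-s * u) * ∫ t in Set.Ioi u, f t := by
  set μ0 := volume.restrict (Set.Ioi (0:ℝ)) with hμ0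
  -- measurable nonnegative representative of f
  obtain ⟨g, hg_meas, hfg⟩ : ∃ g, Measurable g ∧ f =ᵐ[μ0] g :=
    ⟨hf_int.1.mk f, hf_int.1.stronglyMeasurable_mk.measurable, hf_int.1.ae_eq_mk⟩
  set g' : ℝ → ℝ := fun t => max (g t) 0 with hg'def
  have hg'_meas : Measurable g' := hg_meas.max measurable_const
  have hfg' : f =ᵐ[μ0] g' := by
    have h0 : ∀ᵐ t ∂μ0, 0 ≤ f t :=
      (ae_restrict_iff' measurableSet_Ioi).mpr (ae_of_all _ fun t ht => hf_nonneg t (le_of_lt ht))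
    filter_upwards [hfg, h0] with t h1 h2
    simp [hg'def, ← h1, h2, max_eq_left]
  set Φ : ℝ × ℝ → ENNReal := fun p =>
    if p.2 < p.1 then ENNReal.ofReal (s * Real.exp (-s * p.2) * g' p.1) else 0 with hΦdef
  have hΦ_meas : Measurable Φ := by
    refine Measurable.ite (measurableSet_lt measurable_snd measurable_fst) ?_ measurable_const
    exact ((measurable_const.mul
      (Real.measurable_exp.comp (measurable_snd.const_mul (-s)))).mul
      (hg'_meas.comp measurable_fst)).ennreal_ofReal
  have h1 : IntegrableOn (fun t => Real.exp (-s*t) * f t) (Set.Ioi 0) := by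
    refine Integrable.mono' hf_int.norm
      ((Real.continuous_exp.comp (continuous_const.mul continuous_id)).aestronglyMeasurable.mul
        hf_int.1) ?_
    refine (ae_restrict_iff' measurableSet_Ioi).mpr (ae_of_all _ fun t ht => ?_)
    have he : Real.exp (-s*t) ≤ 1 := by
      rw [← Real.exp_zero]
      exact Real.exp_le_exp.mpr (by nlinarith [Set.mem_Ioi.mp ht])
    have he0 : 0 < Real.exp (-s*t) := Real.exp_pos _
    rw [norm_mul]
    calc ‖Real.exp (-s*t)‖ * ‖f t‖ ≤ 1 * ‖f t‖ := by
          apply mul_le_mul_of_nonneg_right _ (norm_nonneg _)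
          rwa [Real.norm_eq_abs, abs_of_pos he0]
      _ = ‖f t‖ := one_mul _
  -- e1 : inner integral in u
  have e1 : ∀ᵐ t ∂μ0, (∫⁻ u, Φ (t, u) ∂μ0)
      = ENNReal.ofReal ((1 - Real.exp (-s*t)) * f t) := by
    have hmem : ∀ᵐ t ∂μ0, t ∈ Set.Ioi (0:ℝ) :=
      (ae_restrict_iff' measurableSet_Ioi).mpr (ae_of_all _ fun t ht => ht)
    filter_upwards [hfg', hmem] with t heq ht
    have ht0 : (0:ℝ) < t := ht
    have hind : ∀ u, Φ (t, u)
        = (Set.Iio t).indicator (fun u => ENNReal.ofReal (s * Real.exp (-s * u) * g' t)) u := by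
      intro u
      by_cases h : u < t <;> simp [hΦdef, Set.indicator_apply, Set.mem_Iio, h]
    have step1 : (∫⁻ u, Φ (t, u) ∂μ0)
        = ∫⁻ u in Set.Iio t, ENNReal.ofReal (s * Real.exp (-s * u) * g' t) ∂μ0 := by
      rw [lintegral_congr hind]
      exact lintegral_indicator measurableSet_Iio _
    rw [step1, hμ0, Measure.restrict_restrict measurableSet_Iio, Set.Iio_inter_Ioi]
    have hInt : IntegrableOn (fun u => s * Real.exp (-s * u) * g' t) (Set.Ioo 0 t) := by
      apply Integrable.mul_const
      exact ((continuous_const.mul ((continuous_const.mul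
        continuous_id).rexp)).integrableOn_Icc).mono_set Set.Ioo_subset_Icc_self
    have hnn : 0 ≤ᵐ[volume.restrict (Set.Ioo (0:ℝ) t)] fun u => s * Real.exp (-s * u) * g' t :=
      ae_of_all _ fun u => by positivity
    rw [← ofReal_integral_eq_lintegral_ofReal hInt hnn]
    rw [MeasureTheory.integral_mul_const, one_sub_exp_integral hs ht0, ← heq]
  -- e2 : inner integral in t
  have e2 : ∀ᵐ u ∂μ0, (∫⁻ t, Φ (t, u) ∂μ0)
      = ENNReal.ofReal (s * Real.exp (-s*u) * ∫ t in Set.Ioi u, f t) := by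
    refine (ae_restrict_iff' measurableSet_Ioi).mpr (ae_of_all _ fun u hu => ?_)
    have hu0 : (0:ℝ) < u := hu
    have hind : ∀ t, Φ (t, u)
        = (Set.Ioi u).indicator (fun t => ENNReal.ofReal (s * Real.exp (-s * u) * g' t)) t := by
      intro t
      by_cases h : u < t <;> simp [hΦdef, Set.indicator_apply, Set.mem_Ioi, h]
    have step1 : (∫⁻ t, Φ (t, u) ∂μ0)
        = ∫⁻ t in Set.Ioi u, ENNReal.ofReal (s * Real.exp (-s * u) * g' t) ∂μ0 := by
      rw [lintegral_congr hind]
      exact lintegral_indicator measurableSet_Ioi _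
    rw [step1, hμ0, Measure.restrict_restrict measurableSet_Ioi, Set.Ioi_inter_Ioi,
      max_eq_left hu0.le]
    have hsub : Set.Ioi u ⊆ Set.Ioi (0:ℝ) := Set.Ioi_subset_Ioi hu0.le
    have hfg'' : f =ᵐ[volume.restrict (Set.Ioi u)] g' :=
      hfg'.filter_mono (ae_mono (Measure.restrict_mono hsub le_rfl))
    have hsplit : ∀ t : ℝ, ENNReal.ofReal (s * Real.exp (-s * u) * g' t)
        = ENNReal.ofReal (s * Real.exp (-s * u)) * ENNReal.ofReal (g' t) := fun t =>
      ENNReal.ofReal_mul (by positivity)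
    simp only [hsplit]
    rw [lintegral_const_mul _ hg'_meas.ennreal_ofReal]
    have hgf : (∫⁻ t in Set.Ioi u, ENNReal.ofReal (g' t))
        = ∫⁻ t in Set.Ioi u, ENNReal.ofReal (f t) := by
      refine lintegral_congr_ae ?_
      filter_upwards [hfg''] with t h
      rw [h]
    have hnn : 0 ≤ᵐ[volume.restrict (Set.Ioi u)] f :=
      (ae_restrict_iff' measurableSet_Ioi).mpr
        (ae_of_all _ fun t ht => hf_nonneg t (le_of_lt (hu0.trans ht)))
    rw [hgf, ← ofReal_integral_eq_lintegral_ofReal (hf_int.mono_set hsub) hnn,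
      ← ENNReal.ofReal_mul (by positivity)]
  -- Tonelli swap
  have swap : (∫⁻ t, ∫⁻ u, Φ (t, u) ∂μ0 ∂μ0) = ∫⁻ u, ∫⁻ t, Φ (t, u) ∂μ0 ∂μ0 :=
    lintegral_lintegral_swap hΦ_meas.aemeasurable
  -- identify the left iterated integral
  have hI : Integrable (fun t => (1 - Real.exp (-s*t)) * f t) μ0 := by
    refine (hf_int.sub h1).congr (ae_of_all _ fun t => by simp only [Pi.sub_apply]; ring)
  have hInn : 0 ≤ᵐ[μ0] fun t => (1 - Real.exp (-s*t)) * f t := by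
    refine (ae_restrict_iff' measurableSet_Ioi).mpr (ae_of_all _ fun t ht => ?_)
    have ht0 : (0:ℝ) < t := ht
    have he : Real.exp (-s*t) ≤ 1 := by
      rw [← Real.exp_zero]; exact Real.exp_le_exp.mpr (by nlinarith)
    exact mul_nonneg (by linarith) (hf_nonneg t ht0.le)
  have hLHS : (∫⁻ t, ∫⁻ u, Φ (t, u) ∂μ0 ∂μ0)
      = ENNReal.ofReal (∫ t in Set.Ioi (0:ℝ), (1 - Real.exp (-s*t)) * f t) := by
    rw [lintegral_congr_ae e1, ← ofReal_integral_eq_lintegral_ofReal hI hInn]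
  set r : ℝ → ℝ := fun u => s * Real.exp (-s*u) * ∫ t in Set.Ioi u, f t with hrdef
  have hRlint : (∫⁻ u, ∫⁻ t, Φ (t, u) ∂μ0 ∂μ0) = ∫⁻ u, ENNReal.ofReal (r u) ∂μ0 :=
    lintegral_congr_ae e2
  have hfin : (∫⁻ u, ENNReal.ofReal (r u) ∂μ0) ≠ ⊤ := by
    rw [← hRlint, ← swap, hLHS]; exact ENNReal.ofReal_ne_top
  -- measurability of r
  set G : ℝ → ℝ := fun t => ∫ v in Set.Ioi (max t 0), f v with hGdef
  have hG_anti : Antitone G := by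
    intro a b hab
    have hsub : Set.Ioi (max b 0) ⊆ Set.Ioi (max a 0) :=
      Set.Ioi_subset_Ioi (max_le_max hab le_rfl)
    refine setIntegral_mono_set (hf_int.mono_set (Set.Ioi_subset_Ioi (le_max_right a 0))) ?_ ?_
    · refine (ae_restrict_iff' measurableSet_Ioi).mpr (ae_of_all _ fun t ht => ?_)
      exact hf_nonneg t (le_of_lt (lt_of_le_of_lt (le_max_right a 0) ht))
    · exact HasSubset.Subset.eventuallyLE hsub
  have hG_meas : Measurable G := hG_anti.measurable
  have hr_meas : AEStronglyMeasurable r μ0 := by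
    have hm : Measurable (fun u => s * Real.exp (-s*u) * G u) := by fun_prop
    refine hm.aestronglyMeasurable.congr ?_
    refine (ae_restrict_iff' measurableSet_Ioi).mpr (ae_of_all _ fun u hu => ?_)
    have : max u 0 = u := max_eq_left (le_of_lt hu)
    simp [hrdef, hGdef, this]
  have hr_nonneg : 0 ≤ᵐ[μ0] r := by
    refine (ae_restrict_iff' measurableSet_Ioi).mpr (ae_of_all _ fun u hu => ?_)
    have hu0 : (0:ℝ) < u := hu
    have : 0 ≤ ∫ t in Set.Ioi u, f t :=
      setIntegral_nonneg measurableSet_Ioi fun t ht => hf_nonneg t (le_of_lt (hu0.trans ht))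
    positivity
  have hr_int : Integrable r μ0 :=
    ⟨hr_meas, (hasFiniteIntegral_iff_ofReal hr_nonneg).mpr (lt_top_iff_ne_top.mpr hfin)⟩
  have hofReal : ENNReal.ofReal (∫ u, r u ∂μ0)
      = ENNReal.ofReal (∫ t in Set.Ioi (0:ℝ), (1 - Real.exp (-s*t)) * f t) := by
    rw [ofReal_integral_eq_lintegral_ofReal hr_int hr_nonneg, ← hRlint, ← swap, hLHS]
  have hreal : (∫ u, r u ∂μ0) = ∫ t in Set.Ioi (0:ℝ), (1 - Real.exp (-s*t)) * f t := by
    have h1' : 0 ≤ ∫ u, r u ∂μ0 := integral_nonneg_of_ae hr_nonneg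
    have h2' : 0 ≤ ∫ t in Set.Ioi (0:ℝ), (1 - Real.exp (-s*t)) * f t :=
      integral_nonneg_of_ae hInn
    exact (ENNReal.ofReal_eq_ofReal_iff h1' h2').mp hofReal
  have hsplit : (∫ t in Set.Ioi (0:ℝ), f t) - laplace f s
      = ∫ t in Set.Ioi (0:ℝ), (1 - Real.exp (-s*t)) * f t := by
    rw [laplace, ← integral_sub hf_int h1]
    exact integral_congr_ae (ae_of_all _ fun t => by ring)
  rw [hsplit, ← hreal]

theorem tauberian_tail_to_laplace (f : ℝ → ℝ)
    (hf_nonneg : ∀ t, 0 ≤ t → 0 ≤ f t)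
    (hf_int : IntegrableOn f (Set.Ioi 0))
    (hf_density : ∫ t in Set.Ioi (0:ℝ), f t = 1)
    (Ψ : ℝ → ℝ) (hΨ : ∀ t, Ψ t = ∫ u in Set.Ioi t, f u)
    (β c : ℝ) (hβ0 : 0 < β) (hβ1 : β < 1) (hc : 0 < c)
    (htail : Tendsto (fun t : ℝ => t ^ β * Ψ t) atTop (nhds (c / β))) :
    Tendsto (fun s : ℝ =>
        (laplace f s - (1 - (c * Real.pi / (Real.Gamma (β + 1) * Real.sin (β * Real.pi)))
          * s ^ β)) / s ^ β)
      (nhdsWithin 0 (Set.Ioi 0)) (nhds 0) := by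
  have hβ1' : (0:ℝ) < 1 - β := by linarith
  set μ := c * Real.pi / (Real.Gamma (β + 1) * Real.sin (β * Real.pi)) with hμdef
  have hΓβ : 0 < Real.Gamma β := Real.Gamma_pos_of_pos hβ0
  have hsin : 0 < Real.sin (β * Real.pi) := by
    apply Real.sin_pos_of_pos_of_lt_pi (by positivity)
    nlinarith [Real.pi_pos]
  have hrefl : Real.Gamma β * Real.Gamma (1 - β) * Real.sin (β * Real.pi) = Real.pi := by
    have hsin' : Real.sin (Real.pi * β) ≠ 0 := by rw [mul_comm]; exact hsin.ne'
    rw [Real.Gamma_mul_Gamma_one_sub, mul_comm β Real.pi, div_mul_cancel₀ _ hsin']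
  have hμ : μ = c / β * Real.Gamma (1 - β) := by
    have hden : (0:ℝ) < β * Real.Gamma β * Real.sin (β * Real.pi) :=
      mul_pos (mul_pos hβ0 hΓβ) hsin
    have h : c / β * Real.Gamma (1 - β) * (β * Real.Gamma β * Real.sin (β * Real.pi))
        = c * Real.pi := by
      field_simp
      linear_combination hrefl
    rw [hμdef, Real.Gamma_add_one hβ0.ne', ← h, mul_div_assoc, div_self hden.ne', mul_one]
  -- basic facts about Ψ
  have hΨ_nonneg : ∀ t : ℝ, 0 < t → 0 ≤ Ψ t := by
    intro t ht
    rw [hΨ]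
    exact setIntegral_nonneg measurableSet_Ioi fun u hu => hf_nonneg u (le_of_lt (ht.trans hu))
  have hΨ_le_one : ∀ t : ℝ, 0 < t → Ψ t ≤ 1 := by
    intro t ht
    have hunion : Set.Ioc 0 t ∪ Set.Ioi t = Set.Ioi (0:ℝ) := Set.Ioc_union_Ioi_eq_Ioi ht.le
    have hsum : (∫ u in Set.Ioc (0:ℝ) t, f u) + ∫ u in Set.Ioi t, f u = 1 := by
      rw [← hf_density, ← hunion,
        setIntegral_union (Set.Ioc_disjoint_Ioi le_rfl) measurableSet_Ioi
          ((hf_int.mono_set (by rw [← hunion]; exact Set.subset_union_left)))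
          ((hf_int.mono_set (by rw [← hunion]; exact Set.subset_union_right)))]
    have hnn : 0 ≤ ∫ u in Set.Ioc (0:ℝ) t, f u :=
      setIntegral_nonneg measurableSet_Ioc fun u hu => hf_nonneg u hu.1.le
    rw [hΨ]; linarith
  -- uniform bound on t^β * Ψ t
  obtain ⟨T, hT⟩ : ∃ T : ℝ, ∀ t ≥ T, t ^ β * Ψ t ≤ c / β + 1 := by
    have := htail.eventually (eventually_le_nhds (lt_add_one (c/β)))
    exact eventually_atTop.mp this
  set T' : ℝ := max T 1 with hT'def
  set M : ℝ := max (T' ^ β) (c / β + 1) with hMdef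
  have hbound : ∀ t : ℝ, 0 < t → t ^ β * Ψ t ≤ M := by
    intro t ht
    rcases le_or_gt T' t with h | h
    · exact le_trans (hT t (le_trans (le_max_left T 1) h)) (le_max_right _ _)
    · have h1 : t ^ β ≤ T' ^ β :=
        Real.rpow_le_rpow ht.le h.le hβ0.le
      have h2 : t ^ β * Ψ t ≤ t ^ β * 1 :=
        mul_le_mul_of_nonneg_left (hΨ_le_one t ht) (Real.rpow_nonneg ht.le β)
      calc t ^ β * Ψ t ≤ t ^ β := by linarith
        _ ≤ T' ^ β := h1
        _ ≤ M := le_max_left _ _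
  have hbound0 : ∀ t : ℝ, 0 < t → 0 ≤ t ^ β * Ψ t := fun t ht =>
    mul_nonneg (Real.rpow_nonneg ht.le β) (hΨ_nonneg t ht)
  -- measurable version of Ψ on positives
  set μ0 := volume.restrict (Set.Ioi (0:ℝ)) with hμ0
  set G : ℝ → ℝ := fun t => ∫ v in Set.Ioi (max t 0), f v with hGdef
  have hG_anti : Antitone G := by
    intro a b hab
    refine setIntegral_mono_set (hf_int.mono_set (Set.Ioi_subset_Ioi (le_max_right a 0))) ?_ ?_
    · refine (ae_restrict_iff' measurableSet_Ioi).mpr (ae_of_all _ fun t ht => ?_)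
      exact hf_nonneg t (le_of_lt (lt_of_le_of_lt (le_max_right a 0) ht))
    · exact HasSubset.Subset.eventuallyLE (Set.Ioi_subset_Ioi (max_le_max hab le_rfl))
  have hG_meas : Measurable G := hG_anti.measurable
  have hGΨ : ∀ t : ℝ, 0 < t → G t = Ψ t := by
    intro t ht
    rw [hGdef, hΨ]
    simp [max_eq_left ht.le]
  -- the DCT family
  set FF : ℝ → ℝ → ℝ := fun s u => Real.exp (-u) * u ^ (-β) * ((u/s) ^ β * Ψ (u/s)) with hFFdef
  have hFmeas : ∀ s : ℝ, s ∈ Set.Ioi (0:ℝ) → AEStronglyMeasurable (FF s) μ0 := by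
    intro s hs
    have hm : Measurable (fun u : ℝ => Real.exp (-u) * u ^ (-β) * ((u/s) ^ β * G (u/s))) := by
      fun_prop
    refine hm.aestronglyMeasurable.congr ?_
    refine (ae_restrict_iff' measurableSet_Ioi).mpr (ae_of_all _ fun u hu => ?_)
    rw [hFFdef]
    simp only []
    rw [hGΨ _ (div_pos hu hs)]
  have hFbound : ∀ s : ℝ, s ∈ Set.Ioi (0:ℝ) →
      ∀ᵐ u ∂μ0, ‖FF s u‖ ≤ M * (Real.exp (-u) * u ^ (-β)) := by
    intro s hs
    refine (ae_restrict_iff' measurableSet_Ioi).mpr (ae_of_all _ fun u hu => ?_)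
    have hu0 : (0:ℝ) < u := hu
    have hus : (0:ℝ) < u / s := div_pos hu0 hs
    have h1 : 0 ≤ Real.exp (-u) * u ^ (-β) :=
      mul_nonneg (Real.exp_pos _).le (Real.rpow_nonneg hu0.le _)
    have h2 : 0 ≤ (u/s) ^ β * Ψ (u/s) := hbound0 _ hus
    have h3 : (u/s) ^ β * Ψ (u/s) ≤ M := hbound _ hus
    rw [hFFdef]
    simp only []
    rw [Real.norm_eq_abs, abs_of_nonneg (mul_nonneg h1 h2)]
    calc Real.exp (-u) * u ^ (-β) * ((u/s) ^ β * Ψ (u/s))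
        ≤ Real.exp (-u) * u ^ (-β) * M := mul_le_mul_of_nonneg_left h3 h1
      _ = M * (Real.exp (-u) * u ^ (-β)) := by ring
  have hbound_int : Integrable (fun u : ℝ => M * (Real.exp (-u) * u ^ (-β))) μ0 := by
    have := (Real.GammaIntegral_convergent hβ1').const_mul M
    have heq : (fun u : ℝ => M * (Real.exp (-u) * u ^ (1 - β - 1)))
        = fun u : ℝ => M * (Real.exp (-u) * u ^ (-β)) := by
      funext u; norm_num
    rw [hμ0]
    exact heq ▸ this
  have hFlim : ∀ᵐ u ∂μ0, Tendsto (fun s : ℝ => FF s u) (nhdsWithin 0 (Set.Ioi 0))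
      (nhds (Real.exp (-u) * u ^ (-β) * (c/β))) := by
    refine (ae_restrict_iff' measurableSet_Ioi).mpr (ae_of_all _ fun u hu => ?_)
    have hu0 : (0:ℝ) < u := hu
    have h1 : Tendsto (fun s : ℝ => u / s) (nhdsWithin 0 (Set.Ioi 0)) atTop := by
      simpa [div_eq_mul_inv] using tendsto_inv_nhdsGT_zero.const_mul_atTop hu0
    have h2 : Tendsto (fun s : ℝ => (u/s) ^ β * Ψ (u/s)) (nhdsWithin 0 (Set.Ioi 0))
        (nhds (c/β)) := htail.comp h1
    exact tendsto_const_nhds.mul h2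
  have hDCT := tendsto_integral_filter_of_dominated_convergence
    (μ := μ0) (bound := fun u : ℝ => M * (Real.exp (-u) * u ^ (-β)))
    (F := FF) (f := fun u : ℝ => Real.exp (-u) * u ^ (-β) * (c/β))
    (eventually_mem_nhdsWithin.mono hFmeas)
    (eventually_mem_nhdsWithin.mono hFbound)
    hbound_int hFlim
  have hlimval : (∫ u in Set.Ioi (0:ℝ), Real.exp (-u) * u ^ (-β) * (c/β)) = μ := by
    rw [MeasureTheory.integral_mul_const, hμ, Real.Gamma_eq_integral hβ1']
    rw [show (1:ℝ) - β - 1 = -β by ring]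
    ring
  -- the formula for positive s
  have hform : ∀ s : ℝ, s ∈ Set.Ioi (0:ℝ) →
      (laplace f s - (1 - μ * s ^ β)) / s ^ β = μ - ∫ u in Set.Ioi (0:ℝ), FF s u := by
    intro s hs
    have hs0 : (0:ℝ) < s := hs
    have hsβ : (0:ℝ) < s ^ β := Real.rpow_pos_of_pos hs0 β
    have hc1 : Set.EqOn (FF s) (fun u => s ^ (-β) * (Real.exp (-u) * Ψ (u/s)))
        (Set.Ioi (0:ℝ)) := by
      intro u hu
      have hu0 : (0:ℝ) < u := hu
      have h1 : (u/s) ^ β = u ^ β / s ^ β := Real.div_rpow hu0.le hs0.le β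
      have h2 : u ^ (-β) * u ^ β = 1 := by
        rw [← Real.rpow_add hu0]; simp
      have h3 : s ^ (-β) = (s ^ β)⁻¹ := Real.rpow_neg hs0.le β
      show Real.exp (-u) * u ^ (-β) * ((u/s) ^ β * Ψ (u/s))
          = s ^ (-β) * (Real.exp (-u) * Ψ (u/s))
      calc Real.exp (-u) * u ^ (-β) * ((u/s) ^ β * Ψ (u/s))
          = (u ^ (-β) * u ^ β) * (Real.exp (-u) * Ψ (u/s)) * (s ^ β)⁻¹ := by
            rw [h1]; ring
        _ = s ^ (-β) * (Real.exp (-u) * Ψ (u/s)) := by rw [h2, h3]; ring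
    have step1 : (∫ u in Set.Ioi (0:ℝ), FF s u)
        = s ^ (-β) * ∫ u in Set.Ioi (0:ℝ), Real.exp (-u) * Ψ (u/s) := by
      rw [setIntegral_congr_fun measurableSet_Ioi hc1, MeasureTheory.integral_const_mul]
    have step2 : (∫ u in Set.Ioi (0:ℝ), Real.exp (-u) * Ψ (u/s))
        = s * ∫ t in Set.Ioi (0:ℝ), Real.exp (-s*t) * Ψ t := by
      have h := integral_comp_mul_left_Ioi (fun u => Real.exp (-u) * Ψ (u/s)) 0 hs0
      simp only [mul_zero] at h
      have h2 : (fun x : ℝ => Real.exp (-(s*x)) * Ψ (s*x/s)) = fun x : ℝ =>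
          Real.exp (-s*x) * Ψ x := by
        funext x
        rw [mul_div_cancel_left₀ x hs0.ne', neg_mul]
      rw [h2] at h
      rw [h, smul_eq_mul, ← mul_assoc, mul_inv_cancel₀ hs0.ne', one_mul]
    have step3 : (1:ℝ) - laplace f s = s * ∫ t in Set.Ioi (0:ℝ), Real.exp (-s*t) * Ψ t := by
      have hk := key_fubini f hf_nonneg hf_int hs0
      have hk1 : (1:ℝ) - laplace f s
          = ∫ u in Set.Ioi (0:ℝ), s * Real.exp (-s * u) * ∫ t in Set.Ioi u, f t := by
        rw [← hf_density]; exact hk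
      rw [hk1]
      rw [← MeasureTheory.integral_const_mul]
      refine setIntegral_congr_fun measurableSet_Ioi fun t ht => ?_
      rw [hΨ]
      ring
    have step4 : (∫ u in Set.Ioi (0:ℝ), FF s u) = (1 - laplace f s) / s ^ β := by
      rw [step1, step2, ← step3, Real.rpow_neg hs0.le β]
      field_simp
    rw [step4]
    field_simp
    ring
  have hDCT2 : Tendsto (fun s : ℝ => μ - ∫ u in Set.Ioi (0:ℝ), FF s u)
      (nhdsWithin 0 (Set.Ioi 0)) (nhds (μ - μ)) := by
    refine tendsto_const_nhds.sub ?_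
    have h0 : (∫ a : ℝ, (fun u : ℝ => Real.exp (-u) * u ^ (-β) * (c/β)) a ∂μ0) = μ := hlimval
    exact h0 ▸ hDCT
  rw [sub_self] at hDCT2
  refine hDCT2.congr' ?_
  filter_upwards [eventually_mem_nhdsWithin] with s hs
  rw [hform s hs]
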